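/- arXiv:1904.12768 — 3 statements merged into one kernel-verified Lean document; each statement's English description precedes it below -/
import Mathlib

section
/- Let σ : [0,∞) → (0,∞) be strictly decreasing, convex, and twice continuously differentiable, let 𝒂̲ := −1/(2σ(0)σ′(0)), and for a > 0 let μ(a) be the unique maximizer of e ↦ −a·σ(e)² − e over [0,∞). Then μ is continuous and strictly increasing on [𝒂̲, ∞), and for every a > 𝒂̲, μ is differentiable at a with μ′(a) = [ 2a²( (σ′(μ(a)))² + σ(μ(a))·σ″(μ(a)) ) ]^{-1} > 0. -/
open Set Filter Topology

/-- The (within-`[0,∞)`) derivative of `σ`. -/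
noncomputable def sigd (σ : ℝ → ℝ) : ℝ → ℝ := derivWithin σ (Set.Ici 0)

/-- The (within-`[0,∞)`) second derivative of `σ`. -/
noncomputable def sigd2 (σ : ℝ → ℝ) : ℝ → ℝ := derivWithin (sigd σ) (Set.Ici 0)

/-- `𝒂̲ = -1/(2 σ(0) σ'(0))`. -/
noncomputable def alow (σ : ℝ → ℝ) : ℝ := -1 / (2 * σ 0 * sigd σ 0)

/-- `m` is the unique maximizer of `f` on `S`. -/
def UniqueMaxOn (f : ℝ → ℝ) (S : Set ℝ) (m : ℝ) : Prop :=
  m ∈ S ∧ (∀ e ∈ S, f e ≤ f m) ∧ ∀ e ∈ S, (∀ e' ∈ S, f e' ≤ f e) → e = m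

theorem stmt_3 (σ μ : ℝ → ℝ)
    (hpos : ∀ e ∈ Set.Ici (0:ℝ), 0 < σ e)
    (hanti : StrictAntiOn σ (Set.Ici 0))
    (hconv : ConvexOn ℝ (Set.Ici 0) σ)
    (hC2 : ContDiffOn ℝ 2 σ (Set.Ici 0))
    (hμ : ∀ a : ℝ, 0 < a →
      UniqueMaxOn (fun e => -a * σ e ^ 2 - e) (Set.Ici 0) (μ a)) :
    ContinuousOn μ (Set.Ici (alow σ)) ∧
    StrictMonoOn μ (Set.Ici (alow σ)) ∧
    ∀ a : ℝ, alow σ < a →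
      HasDerivAt μ (2 * a ^ 2 * ((sigd σ (μ a)) ^ 2 + σ (μ a) * sigd2 σ (μ a)))⁻¹ a ∧
      0 < (2 * a ^ 2 * ((sigd σ (μ a)) ^ 2 + σ (μ a) * sigd2 σ (μ a)))⁻¹ := by
  have hUD : UniqueDiffOn ℝ (Set.Ici (0:ℝ)) := uniqueDiffOn_Ici 0
  have hσdiff : DifferentiableOn ℝ σ (Set.Ici 0) := hC2.differentiableOn (by norm_num)
  have hdC1 : ContDiffOn ℝ 1 (sigd σ) (Set.Ici 0) := hC2.derivWithin hUD (by norm_num)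
  have hddiff : DifferentiableOn ℝ (sigd σ) (Set.Ici 0) := hdC1.differentiableOn (by norm_num)
  have hdcont : ContinuousOn (sigd σ) (Set.Ici 0) := hdC1.continuousOn
  have hσ' : ∀ x ∈ Set.Ici (0:ℝ), HasDerivWithinAt σ (sigd σ x) (Set.Ici 0) x :=
    fun x hx => (hσdiff x hx).hasDerivWithinAt
  have hd' : ∀ x ∈ Set.Ici (0:ℝ), HasDerivWithinAt (sigd σ) (sigd2 σ x) (Set.Ici 0) x :=
    fun x hx => (hddiff x hx).hasDerivWithinAt
  -- σ' < 0 on [0, ∞)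
  have hdneg : ∀ x ∈ Set.Ici (0:ℝ), sigd σ x < 0 := by
    intro x hx
    have hx1 : x + 1 ∈ Set.Ici (0:ℝ) := by
      simp only [Set.mem_Ici] at hx ⊢; linarith
    have h1 : sigd σ x ≤ slope σ x (x + 1) :=
      hconv.derivWithin_le_slope hx hx1 (lt_add_one x) (hσdiff x hx)
    have h2 : slope σ x (x + 1) < 0 := by
      rw [slope_def_field]
      apply div_neg_of_neg_of_pos
      · have := hanti hx hx1 (lt_add_one x); linarith
      · linarith
    linarith
  have hσat : ∀ x : ℝ, 0 < x → HasDerivAt σ (sigd σ x) x :=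
    fun x hx => (hσ' x hx.le).hasDerivAt (Ici_mem_nhds hx)
  have hdat : ∀ x : ℝ, 0 < x → HasDerivAt (sigd σ) (sigd2 σ x) x :=
    fun x hx => (hd' x hx.le).hasDerivAt (Ici_mem_nhds hx)
  -- σ' is monotone
  have hdmono : MonotoneOn (sigd σ) (Set.Ici 0) := hconv.monotoneOn_derivWithin hσdiff
  -- σ'' ≥ 0 on [0, ∞)
  have hd2nonneg : ∀ x ∈ Set.Ici (0:ℝ), 0 ≤ sigd2 σ x := by
    intro x hx
    have hT : Filter.Tendsto (slope (sigd σ) x) (𝓝[>] x) (𝓝 (sigd2 σ x)) := by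
      have := hasDerivWithinAt_iff_tendsto_slope.1 (hd' x hx)
      exact this.mono_left (nhdsWithin_mono x (fun y hy =>
        ⟨Set.mem_Ici.2 (le_trans (Set.mem_Ici.1 hx) (le_of_lt (Set.mem_Ioi.1 hy))), ne_of_gt hy⟩))
    refine ge_of_tendsto hT ?_
    filter_upwards [self_mem_nhdsWithin] with y hy
    rw [slope_def_field]
    apply div_nonneg
    · have := hdmono hx (Set.mem_Ici.2 (le_trans (Set.mem_Ici.1 hx) (le_of_lt hy))) (le_of_lt hy)
      linarith
    · simp only [Set.mem_Ioi] at hy; linarith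
  set g : ℝ → ℝ := fun e => σ e * sigd σ e with hgdef
  set gp : ℝ → ℝ := fun x => sigd σ x ^ 2 + σ x * sigd2 σ x with hgpdef
  have hgp_pos : ∀ x ∈ Set.Ici (0:ℝ), 0 < gp x := by
    intro x hx
    have h1 : sigd σ x ≠ 0 := ne_of_lt (hdneg x hx)
    have h2 : 0 ≤ σ x * sigd2 σ x := mul_nonneg (hpos x hx).le (hd2nonneg x hx)
    have h3 : 0 < sigd σ x ^ 2 := by positivity
    simp only [hgpdef]
    linarith
  have hg' : ∀ x ∈ Set.Ici (0:ℝ), HasDerivWithinAt g (gp x) (Set.Ici 0) x := by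
    intro x hx
    have := (hσ' x hx).mul (hd' x hx)
    exact this.congr_deriv (by show sigd σ x * sigd σ x + σ x * sigd2 σ x = sigd σ x ^ 2 + σ x * sigd2 σ x; ring)
  have hgat : ∀ x : ℝ, 0 < x → HasDerivAt g (gp x) x :=
    fun x hx => (hg' x hx.le).hasDerivAt (Ici_mem_nhds hx)
  have hgcont : ContinuousOn g (Set.Ici 0) := (hσdiff.continuousOn).mul hdcont
  have hgmono : StrictMonoOn g (Set.Ici 0) := by
    apply strictMonoOn_of_deriv_pos (convex_Ici 0) hgcont
    intro x hx
    rw [interior_Ici] at hx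
    rw [(hgat x hx).deriv]
    exact hgp_pos x (Set.mem_Ici.2 (le_of_lt hx))
  have hg0 : g 0 < 0 := mul_neg_of_pos_of_neg (hpos 0 Set.self_mem_Ici) (hdneg 0 Set.self_mem_Ici)
  have halow : alow σ = -1 / (2 * g 0) := by
    rw [alow, hgdef]; ring_nf
  have halow_pos : 0 < alow σ := by
    rw [halow]
    apply div_pos_of_neg_of_neg <;> linarith
  have halow_eq : g 0 = -1 / (2 * alow σ) := by
    rw [halow]
    field_simp
  -- first-order condition at an interior maximizer
  have hfoc : ∀ a : ℝ, 0 < a → 0 < μ a → g (μ a) = -1 / (2 * a) := by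
    intro a ha hm
    obtain ⟨hmem, hmax, -⟩ := hμ a ha
    have hloc : IsLocalMax (fun e => -a * σ e ^ 2 - e) (μ a) := by
      filter_upwards [Ici_mem_nhds hm] with e he using hmax e he
    have hD : HasDerivAt (fun e => -a * σ e ^ 2 - e)
        (-a * (2 * σ (μ a) ^ (2 - 1) * sigd σ (μ a)) - 1) (μ a) := by
      exact (((hσat (μ a) hm).pow 2).const_mul (-a)).sub (hasDerivAt_id (μ a))
    have h0 := hloc.hasDerivAt_eq_zero hD
    have ha' : a ≠ 0 := ne_of_gt ha
    norm_num at h0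
    show σ (μ a) * sigd σ (μ a) = -1 / (2 * a)
    rw [eq_div_iff (by positivity : (2:ℝ) * a ≠ 0)]
    linear_combination (-1 : ℝ) * h0
  -- for a > alow, the maximizer is interior
  have hbd : ∀ a : ℝ, alow σ < a → 0 < μ a := by
    intro a ha
    have ha0 : 0 < a := lt_trans halow_pos ha
    obtain ⟨hmem, hmax, -⟩ := hμ a ha0
    rcases lt_or_eq_of_le (Set.mem_Ici.1 hmem : (0:ℝ) ≤ μ a) with h | h
    · exact h
    -- μ a = 0 : contradiction with positive right derivative at 0
    exfalso
    have hg0' : g 0 ≠ 0 := ne_of_lt hg0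
    have h1 : alow σ * (2 * g 0) = -1 := by
      rw [halow]
      field_simp
    have h2 : a * (2 * g 0) < alow σ * (2 * g 0) :=
      mul_lt_mul_of_neg_right ha (by linarith)
    have hcpos : 0 < -a * (2 * σ 0 ^ (2 - 1) * sigd σ 0) - 1 := by
      norm_num
      simp only [hgdef] at h1 h2
      nlinarith
    set c : ℝ := -a * (2 * σ 0 ^ (2 - 1) * sigd σ 0) - 1 with hcdef
    have hD : HasDerivWithinAt (fun e => -a * σ e ^ 2 - e) c (Set.Ici 0) 0 := by
      exact (((hσ' 0 Set.self_mem_Ici).pow 2).const_mul (-a)).sub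
        (hasDerivWithinAt_id 0 _)
    rw [hasDerivWithinAt_iff_tendsto_slope] at hD
    have hD' : Filter.Tendsto (slope (fun e => -a * σ e ^ 2 - e) 0) (𝓝[>] (0:ℝ)) (𝓝 c) :=
      hD.mono_left (nhdsWithin_mono 0 (fun y hy => ⟨Set.mem_Ici.2 (le_of_lt (Set.mem_Ioi.1 hy)), ne_of_gt hy⟩))
    have hev : ∀ᶠ y in 𝓝[>] (0:ℝ), 0 < slope (fun e => -a * σ e ^ 2 - e) 0 y :=
      hD'.eventually (eventually_mem_set.2 (Ioi_mem_nhds hcpos))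
    obtain ⟨y, hy1, hy2⟩ := (hev.and self_mem_nhdsWithin).exists
    rw [slope_def_field] at hy1
    have hypos : (0:ℝ) < y - 0 := by simpa using (hy2 : y ∈ Set.Ioi (0:ℝ))
    have hnum : 0 < (fun e => -a * σ e ^ 2 - e) y - (fun e => -a * σ e ^ 2 - e) 0 := by
      by_contra hc
      push_neg at hc
      have := div_nonpos_of_nonpos_of_nonneg hc hypos.le
      linarith
    have hle := hmax y (le_of_lt (hy2 : y ∈ Set.Ioi (0:ℝ)))
    rw [← h] at hle
    simp only at hnum hle
    linarith
  -- key identity for all a ≥ alow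
  have hkey : ∀ a : ℝ, alow σ ≤ a → g (μ a) = -1 / (2 * a) := by
    intro a ha
    rcases lt_or_eq_of_le ha with h | h
    · exact hfoc a (lt_trans halow_pos h) (hbd a h)
    · rcases lt_or_eq_of_le (Set.mem_Ici.1 (hμ a (h ▸ halow_pos)).1 : (0:ℝ) ≤ μ a) with h2 | h2
      · exact hfoc a (h ▸ halow_pos) h2
      · rw [← h2, ← h]
        exact halow_eq
  have hμmem : ∀ a : ℝ, alow σ ≤ a → μ a ∈ Set.Ici (0:ℝ) :=
    fun a ha => (hμ a (lt_of_lt_of_le halow_pos ha)).1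
  -- strict monotonicity
  have hmono : StrictMonoOn μ (Set.Ici (alow σ)) := by
    intro a ha b hb hab
    have ha' : alow σ ≤ a := ha
    have hb' : alow σ ≤ b := hb
    have ha0 : 0 < a := lt_of_lt_of_le halow_pos ha'
    have hb0 : 0 < b := lt_of_lt_of_le halow_pos hb'
    have hgab : g (μ a) < g (μ b) := by
      rw [hkey a ha', hkey b hb']
      rw [div_lt_div_iff₀ (by positivity) (by positivity)]
      nlinarith
    by_contra hc
    push_neg at hc
    have := hgmono.monotoneOn (hμmem b hb') (hμmem a ha') hc
    linarith
  -- continuity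
  have hcont : ContinuousOn μ (Set.Ici (alow σ)) := by
    intro a ha
    have ha' : alow σ ≤ a := ha
    have ha0 : 0 < a := lt_of_lt_of_le halow_pos ha'
    have hm0 : (0:ℝ) ≤ μ a := hμmem a ha'
    have hh : Filter.Tendsto (fun b : ℝ => -1 / (2 * b)) (𝓝[Set.Ici (alow σ)] a)
        (𝓝 (g (μ a))) := by
      rw [hkey a ha']
      apply Filter.Tendsto.mono_left _ nhdsWithin_le_nhds
      exact continuousAt_const.div (continuousAt_const.mul continuousAt_id)
        (by positivity)
    show Filter.Tendsto μ (𝓝[Set.Ici (alow σ)] a) (𝓝 (μ a))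
    rw [tendsto_order]
    constructor
    · intro c hc
      rcases lt_or_ge c 0 with hcneg | hcpos
      · filter_upwards [self_mem_nhdsWithin] with b hb
        exact lt_of_lt_of_le hcneg (hμmem b hb)
      · have hgc : g c < g (μ a) := hgmono hcpos (hμmem a ha') hc
        filter_upwards [hh.eventually (eventually_mem_set.2 (Ioi_mem_nhds hgc)),
          self_mem_nhdsWithin] with b hb1 hb2
        by_contra hcon
        push_neg at hcon
        have h3 := hgmono.monotoneOn (hμmem b hb2) hcpos hcon
        rw [hkey b hb2] at h3
        simp only [Set.mem_Ioi] at hb1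
        linarith
    · intro c hc
      have hcmem : (0:ℝ) ≤ c := le_trans hm0 hc.le
      have hgc : g (μ a) < g c := hgmono (hμmem a ha') hcmem hc
      filter_upwards [hh.eventually (eventually_mem_set.2 (Iio_mem_nhds hgc)),
        self_mem_nhdsWithin] with b hb1 hb2
      by_contra hcon
      push_neg at hcon
      have h3 := hgmono.monotoneOn hcmem (hμmem b hb2) hcon
      rw [hkey b hb2] at h3
      simp only [Set.mem_Iio] at hb1
      linarith
  -- derivative
  have hderiv : ∀ a : ℝ, alow σ < a →
      HasDerivAt μ (2 * a ^ 2 * gp (μ a))⁻¹ a ∧ 0 < (2 * a ^ 2 * gp (μ a))⁻¹ := by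
    intro a ha
    have ha' : alow σ ≤ a := ha.le
    have ha0 : 0 < a := lt_trans halow_pos ha
    have hm : 0 < μ a := hbd a ha
    have hgm_neg : g (μ a) < 0 := by
      rw [hkey a ha']
      apply div_neg_of_neg_of_pos
      · linarith
      · positivity
    have hq0 : g (μ a) ≠ 0 := ne_of_lt hgm_neg
    have hinv : ∀ x : ℝ, x ≠ 0 → -1 / (2 * (-1 / (2 * x))) = x := by
      intro x hx; field_simp
    have hha : -1 / (2 * g (μ a)) = a := by
      rw [hkey a ha']; exact hinv a (ne_of_gt ha0)
    have hcontμ : ContinuousAt μ a :=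
      (hcont a ha').continuousAt (Ici_mem_nhds ha)
    have hconth : ContinuousAt (fun y : ℝ => -1 / (2 * y)) (g (μ a)) :=
      continuousAt_const.div (continuousAt_const.mul continuousAt_id)
        (mul_ne_zero two_ne_zero hq0)
    have hν_cont : ContinuousAt (fun y : ℝ => μ (-1 / (2 * y))) (g (μ a)) := by
      have h1 : ContinuousAt μ ((fun y : ℝ => -1 / (2 * y)) (g (μ a))) := by
        show ContinuousAt μ (-1 / (2 * g (μ a)))
        rw [hha]; exact hcontμ
      exact ContinuousAt.comp (g := μ) (f := fun y : ℝ => -1 / (2 * y))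
        (x := g (μ a)) h1 hconth
    have hν_m : μ (-1 / (2 * g (μ a))) = μ a := by rw [hha]
    have hg_deriv : HasDerivAt g (gp (μ a)) ((fun y : ℝ => μ (-1 / (2 * y))) (g (μ a))) := by
      show HasDerivAt g (gp (μ a)) (μ (-1 / (2 * g (μ a))))
      rw [hν_m]; exact hgat _ hm
    have hgp_ne : gp (μ a) ≠ 0 := ne_of_gt (hgp_pos _ (le_of_lt hm))
    have hfg : ∀ᶠ y in 𝓝 (g (μ a)), g (μ (-1 / (2 * y))) = y := by
      have hev2 : ∀ᶠ z in 𝓝 (-1 / (2 * g (μ a))), alow σ < z := by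
        rw [hha]; exact eventually_mem_set.2 (Ioi_mem_nhds ha)
      filter_upwards [eventually_mem_set.2 (Iio_mem_nhds hgm_neg),
        hconth.eventually hev2] with y h1 h2
      have hyne : y ≠ 0 := ne_of_lt h1
      rw [hkey _ (le_of_lt h2), hinv y hyne]
    have hν_deriv : HasDerivAt (fun y : ℝ => μ (-1 / (2 * y))) (gp (μ a))⁻¹ (g (μ a)) :=
      HasDerivAt.of_local_left_inverse hν_cont hg_deriv hgp_ne hfg
    have hh_deriv : HasDerivAt (fun x : ℝ => -1 / (2 * x)) (1 / (2 * a ^ 2)) a := by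
      have hfun : (fun x : ℝ => -1 / (2 * x)) = fun x : ℝ => -(2:ℝ)⁻¹ * x⁻¹ := by
        funext x
        rcases eq_or_ne x 0 with rfl | hx
        · simp
        · field_simp
      rw [hfun]
      have h2 := (hasDerivAt_inv (ne_of_gt ha0)).const_mul (-(2:ℝ)⁻¹)
      exact h2.congr_deriv (by ring)
    have hν_deriv' : HasDerivAt (fun y : ℝ => μ (-1 / (2 * y))) (gp (μ a))⁻¹
        ((fun x : ℝ => -1 / (2 * x)) a) := by
      show HasDerivAt (fun y : ℝ => μ (-1 / (2 * y))) (gp (μ a))⁻¹ (-1 / (2 * a))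
      rw [← hkey a ha']; exact hν_deriv
    have hcomp := hν_deriv'.comp a hh_deriv
    have hμν : (fun x : ℝ => μ x) =ᶠ[𝓝 a]
        ((fun y : ℝ => μ (-1 / (2 * y))) ∘ (fun x : ℝ => -1 / (2 * x))) := by
      filter_upwards [eventually_ne_nhds (ne_of_gt ha0)] with x hx
      show μ x = μ (-1 / (2 * (-1 / (2 * x))))
      rw [hinv x hx]
    have hfinal : HasDerivAt μ ((gp (μ a))⁻¹ * (1 / (2 * a ^ 2))) a :=
      hcomp.congr_of_eventuallyEq hμν
    have hval : (2 * a ^ 2 * gp (μ a))⁻¹ = (gp (μ a))⁻¹ * (1 / (2 * a ^ 2)) := by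
      rw [mul_inv, one_div]
      ring
    constructor
    · rw [hval]; exact hfinal
    · rw [hval, one_div]
      have := hgp_pos (μ a) (le_of_lt hm)
      positivity
  exact ⟨hcont, hmono, fun a ha => hderiv a ha⟩
end

section
/- In the data-market game (both in the unbounded-effort case, 𝒜_s = [𝒂̲_s, ∞) with ℰ_s = [0,∞), and in the bounded-effort case, 𝒜_s = [𝒂̲_s, 𝒂̄_s] with ℰ_s = [0, e_s^max]), if (c,a) is a generalized Nash equilibrium, then for every data source s the individual-rationality constraint binds: Σ_{j=1}^M c_s^j − Σ_{j=1}^M a_s^j·Σ_{i=1}^N ξ_{s,i}^j·σ_i(μ_i(𝒂_i))² = μ_s(𝒂_s); that is, the expected total payment to s equals the effort s exerts in equilibrium. -/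
/-- Assumption 3 of the paper: `σ` is positive, strictly decreasing, convex and C² on `[0,∞)`. -/
def SigmaOK (σ : ℝ → ℝ) : Prop :=
  (∀ e ∈ Set.Ici (0:ℝ), 0 < σ e) ∧ StrictAntiOn σ (Set.Ici 0) ∧
    ConvexOn ℝ (Set.Ici 0) σ ∧ ContDiffOn ℝ 2 σ (Set.Ici 0)

variable {N M : ℕ}

/-- `𝒂_s = Σ_j a_s^j`, the total quadratic-penalty weight offered to source `s`. -/
noncomputable def boldA (a : Fin M → Fin N → ℝ) (s : Fin N) : ℝ := ∑ j, a j s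

/-- `σ_i(μ_i(𝒂_i))²`, the equilibrium variance of source `i`'s data. -/
noncomputable def Vval (σ μ : Fin N → ℝ → ℝ) (a : Fin M → Fin N → ℝ) (i : Fin N) : ℝ :=
  σ i (μ i (boldA a i)) ^ 2

/-- `q_s^b(a) = a_s^b Σ_i ξ_{s,i}^b σ_i(μ_i(𝒂_i))²`. -/
noncomputable def qb (σ μ : Fin N → ℝ → ℝ) (ξ : Fin M → Fin N → Fin N → ℝ)
    (a : Fin M → Fin N → ℝ) (b : Fin M) (s : Fin N) : ℝ :=
  a b s * ∑ i, ξ b s i * Vval σ μ a i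

/-- `q_s(a) = Σ_j q_s^j(a) + μ_s(𝒂_s)`. -/
noncomputable def qtot (σ μ : Fin N → ℝ → ℝ) (ξ : Fin M → Fin N → Fin N → ℝ)
    (a : Fin M → Fin N → ℝ) (s : Fin N) : ℝ :=
  (∑ j, qb σ μ ξ a j s) + μ s (boldA a s)

/-- Aggregator `b`'s loss `L^b`. -/
noncomputable def Lagg (σ μ : Fin N → ℝ → ℝ) (ξ : Fin M → Fin N → Fin N → ℝ)
    (γ : Fin M → Fin N → ℝ) (c a : Fin M → Fin N → ℝ) (b : Fin M) : ℝ :=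
  (∑ i, γ b i * Vval σ μ a i) +
    ∑ i, (c b i - a b i * ∑ l, ξ b i l * Vval σ μ a l)

/-- Feasibility of `(c^b, a^b)` for aggregator `b` within the profile `(c,a)`:
nonnegative weights, `𝒂_s ∈ 𝒜_s`, individual rationality and nonnegative expected payments. -/
def Feasible (σ μ : Fin N → ℝ → ℝ) (ξ : Fin M → Fin N → Fin N → ℝ)
    (𝒜 : Fin N → Set ℝ) (c a : Fin M → Fin N → ℝ) (b : Fin M) : Prop :=
  ∀ s, 0 ≤ a b s ∧ boldA a s ∈ 𝒜 s ∧
    μ s (boldA a s) ≤ (∑ j, c j s) - ∑ j, qb σ μ ξ a j s ∧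
    0 ≤ c b s - qb σ μ ξ a b s

/-- Generalized Nash equilibrium of the game between the aggregators. -/
def IsGNE (σ μ : Fin N → ℝ → ℝ) (ξ : Fin M → Fin N → Fin N → ℝ)
    (γ : Fin M → Fin N → ℝ) (𝒜 : Fin N → Set ℝ) (c a : Fin M → Fin N → ℝ) : Prop :=
  (∀ b, Feasible σ μ ξ 𝒜 c a b) ∧
    ∀ b (c' a' : Fin N → ℝ),
      Feasible σ μ ξ 𝒜 (Function.update c b c') (Function.update a b a') b →
      Lagg σ μ ξ γ c a b ≤ Lagg σ μ ξ γ (Function.update c b c') (Function.update a b a') b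

lemma alow_pos {σ : ℝ → ℝ} (h : SigmaOK σ) : 0 < alow σ := by
  obtain ⟨hp, hanti, hconv, hC⟩ := h
  have hdiff : DifferentiableWithinAt ℝ σ (Set.Ici 0) 0 :=
    (hC.differentiableOn (by norm_num)) 0 Set.self_mem_Ici
  have hs : sigd σ 0 ≤ slope σ 0 1 :=
    hconv.derivWithin_le_slope Set.self_mem_Ici (by norm_num) one_pos hdiff
  have hslope : slope σ 0 1 < 0 := by
    have := hanti Set.self_mem_Ici (by norm_num : (1:ℝ) ∈ Set.Ici 0) one_pos
    simp [slope_def_field, div_eq_mul_inv]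
    linarith
  have hd : sigd σ 0 < 0 := lt_of_le_of_lt hs hslope
  have h0 : 0 < σ 0 := hp 0 Set.self_mem_Ici
  have hden : 2 * σ 0 * sigd σ 0 < 0 := by nlinarith
  exact div_pos_of_neg_of_neg (by norm_num) hden

theorem stmt_5 (N M : ℕ) (hN : 1 ≤ N) (hM : 2 ≤ M)
    (σ μ : Fin N → ℝ → ℝ) (ξ : Fin M → Fin N → Fin N → ℝ) (γ : Fin M → Fin N → ℝ)
    (E 𝒜 : Fin N → Set ℝ)
    (hσ : ∀ s, SigmaOK (σ s))
    (hμ : ∀ s, ∀ a : ℝ, 0 < a →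
      UniqueMaxOn (fun e => -a * σ s e ^ 2 - e) (E s) (μ s a))
    (hξ0 : ∀ b i l, 0 ≤ ξ b i l) (hξ1 : ∀ b i, ξ b i i = 1)
    (hcase :
      (∀ s, E s = Set.Ici 0 ∧ 𝒜 s = Set.Ici (alow (σ s))) ∨
      (∃ emax aubar : Fin N → ℝ, ∀ s, 0 < emax s ∧ E s = Set.Icc 0 (emax s) ∧
        IsLeast {x : ℝ | 0 < x ∧ μ s x = emax s} (aubar s) ∧
        𝒜 s = Set.Icc (alow (σ s)) (aubar s)))
    (c a : Fin M → Fin N → ℝ)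
    (hGNE : IsGNE σ μ ξ γ 𝒜 c a) :
    ∀ s, (∑ j, c j s) - (∑ j, qb σ μ ξ a j s) = μ s (boldA a s) := by
  intro s
  obtain ⟨hfeas, hopt⟩ := hGNE
  by_contra hne
  have b0 : Fin M := ⟨0, by omega⟩
  have hIR : μ s (boldA a s) ≤ (∑ j, c j s) - ∑ j, qb σ μ ξ a j s := (hfeas b0 s).2.2.1
  have hlt : μ s (boldA a s) < (∑ j, c j s) - ∑ j, qb σ μ ξ a j s :=
    lt_of_le_of_ne hIR (fun h => hne h.symm)
  -- boldA a s is positive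
  have hmemA : boldA a s ∈ 𝒜 s := (hfeas b0 s).2.1
  have halow : 0 < alow (σ s) := alow_pos (hσ s)
  have hbold : 0 < boldA a s := by
    rcases hcase with hc | ⟨emax, aubar, hc⟩
    · rw [(hc s).2] at hmemA; exact lt_of_lt_of_le halow hmemA
    · rw [(hc s).2.2.2] at hmemA; exact lt_of_lt_of_le halow hmemA.1
  -- μ is nonnegative
  have hμ0 : 0 ≤ μ s (boldA a s) := by
    have hmem := (hμ s _ hbold).1
    rcases hcase with hc | ⟨emax, aubar, hc⟩
    · rw [(hc s).1] at hmem; exact hmem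
    · rw [(hc s).2.1] at hmem; exact hmem.1
  -- some aggregator has strictly positive expected payment
  have hterm : ∀ j, 0 ≤ c j s - qb σ μ ξ a j s := fun j => (hfeas j s).2.2.2
  have hsum : (∑ j, (c j s - qb σ μ ξ a j s)) = (∑ j, c j s) - ∑ j, qb σ μ ξ a j s :=
    Finset.sum_sub_distrib _ _
  obtain ⟨b, hb⟩ : ∃ b, 0 < c b s - qb σ μ ξ a b s := by
    by_contra h
    push_neg at h
    have : (∑ j, (c j s - qb σ μ ξ a j s)) ≤ 0 := Finset.sum_nonpos fun j _ => h j
    rw [hsum] at this; linarith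
  set δ : ℝ := min (((∑ j, c j s) - ∑ j, qb σ μ ξ a j s) - μ s (boldA a s))
      (c b s - qb σ μ ξ a b s) with hδdef
  have hδ : 0 < δ := lt_min (by linarith) hb
  have hδ1 : δ ≤ ((∑ j, c j s) - ∑ j, qb σ μ ξ a j s) - μ s (boldA a s) := min_le_left _ _
  have hδ2 : δ ≤ c b s - qb σ μ ξ a b s := min_le_right _ _
  set c' : Fin N → ℝ := Function.update (c b) s (c b s - δ) with hc'def
  -- sums of updated c
  have hcsum : ∀ s', (∑ j, Function.update c b c' j s')
      = (∑ j, c j s') + (c' s' - c b s') := by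
    intro s'
    have h1 : ∀ (f : Fin M → ℝ), (∑ j, f j) = f b + ∑ j ∈ Finset.univ.erase b, f j :=
      fun f => (Finset.add_sum_erase _ f (Finset.mem_univ b)).symm
    rw [h1 (fun j => Function.update c b c' j s'), h1 (fun j => c j s')]
    have h2 : (∑ j ∈ Finset.univ.erase b, Function.update c b c' j s')
        = ∑ j ∈ Finset.univ.erase b, c j s' :=
      Finset.sum_congr rfl fun j hj => by
        rw [Function.update_of_ne (Finset.ne_of_mem_erase hj)]
    rw [h2, Function.update_self]; ring
  have hc'val : ∀ s', c' s' = if s' = s then c b s - δ else c b s' := by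
    intro s'; rw [hc'def, Function.update_apply]
  -- feasibility of the deviation
  have hF : Feasible σ μ ξ 𝒜 (Function.update c b c') a b := by
    intro s'
    refine ⟨(hfeas b s').1, (hfeas b s').2.1, ?_, ?_⟩
    · rw [hcsum s', hc'val s']
      by_cases h : s' = s
      · subst h
        simp only [if_pos rfl, if_true]
        have := (hfeas b s').2.2.1
        linarith
      · simp only [if_neg h]
        have := (hfeas b s').2.2.1
        linarith
    · rw [Function.update_self, hc'val s']
      by_cases h : s' = s
      · subst h; simp only [if_pos rfl, if_true]; linarith
      · simp only [if_neg h]; exact (hfeas b s').2.2.2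
  -- the deviation strictly reduces the loss
  have hL : Lagg σ μ ξ γ (Function.update c b c') a b = Lagg σ μ ξ γ c a b - δ := by
    unfold Lagg
    rw [Function.update_self]
    have h3 : (∑ i, (c' i - a b i * ∑ l, ξ b i l * Vval σ μ a l))
        = (∑ i, (c b i - a b i * ∑ l, ξ b i l * Vval σ μ a l)) - δ := by
      rw [Finset.sum_sub_distrib, Finset.sum_sub_distrib]
      have h4 : (∑ i, c' i) = (∑ i, c b i) - δ := by
        have h5 : ∀ (f : Fin N → ℝ), (∑ i, f i) = f s + ∑ i ∈ Finset.univ.erase s, f i :=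
          fun f => (Finset.add_sum_erase _ f (Finset.mem_univ s)).symm
        rw [h5 c', h5 (c b)]
        have h6 : (∑ i ∈ Finset.univ.erase s, c' i) = ∑ i ∈ Finset.univ.erase s, c b i :=
          Finset.sum_congr rfl fun i hi => by
            rw [hc'val i, if_neg (Finset.ne_of_mem_erase hi)]
        rw [h6, hc'val s, if_pos rfl]; ring
      rw [h4]; ring
    rw [h3]; ring
  have hle := hopt b c' (a b)
  rw [Function.update_eq_self] at hle
  have := hle hF
  rw [hL] at this
  linarith
end

section
/- Let σ : [0,∞) → (0,∞) be strictly decreasing, convex, and twice continuously differentiable, let 𝒂̲ := −1/(2σ(0)σ′(0)), and for a > 0 let μ(a) be the unique maximizer of e ↦ −a·σ(e)² − e over [0,∞). Let w > 0, t ≥ 0, and let 𝒂̲ ≤ α ≤ β with t ≤ β. Then the function F(a) = w·σ(μ(a+t))² + μ(a+t) attains a unique minimum over the set { a ≥ 0 : α ≤ a + t ≤ β }, namely at a* = min(β, max(α, t, w)) − t; equivalently, the minimizing total parameter 𝒂* = a* + t is the projection of max(w, t) onto [α, β]. -/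
open Set Filter

open Set Filter

lemma diff_sq (σ : ℝ → ℝ) (hC2 : ContDiffOn ℝ 2 σ (Set.Ici 0)) (m : ℝ) (hm : 0 ≤ m) :
    HasDerivWithinAt (fun x => σ x ^ 2) (2 * σ m * derivWithin σ (Set.Ici 0) m) (Set.Ici 0) m := by
  have hd : DifferentiableOn ℝ σ (Set.Ici 0) := hC2.differentiableOn (by norm_num)
  have h1 : HasDerivWithinAt σ (derivWithin σ (Set.Ici 0) m) (Set.Ici 0) m :=
    (hd m hm).hasDerivWithinAt
  have h2 := h1.pow 2
  simpa [Pi.pow_def] using h2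

lemma right_bound (σ : ℝ → ℝ) (hC2 : ContDiffOn ℝ 2 σ (Set.Ici 0))
    (m q : ℝ) (hm : 0 ≤ m) (hq : 0 < q)
    (h : ∀ e : ℝ, 0 ≤ e → m < e → q * (σ m ^ 2 - σ e ^ 2) ≤ e - m) :
    -1 / q ≤ 2 * σ m * derivWithin σ (Set.Ici 0) m := by
  have hh := diff_sq σ hC2 m hm
  rw [hasDerivWithinAt_iff_tendsto_slope] at hh
  have hsub : Set.Ioi m ⊆ Set.Ici 0 \ {m} := by
    intro x hx
    simp only [Set.mem_diff, Set.mem_Ici, Set.mem_singleton_iff]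
    exact ⟨le_trans hm (le_of_lt hx), ne_of_gt hx⟩
  have ht := hh.mono_left (nhdsWithin_mono m hsub)
  refine ge_of_tendsto ht ?_
  filter_upwards [self_mem_nhdsWithin] with e he
  have hme : m < e := he
  have he0 : 0 ≤ e := le_trans hm hme.le
  have hkey := h e he0 hme
  rw [slope_def_field, div_le_div_iff₀ hq (sub_pos.mpr hme)]
  nlinarith

lemma left_bound (σ : ℝ → ℝ) (hC2 : ContDiffOn ℝ 2 σ (Set.Ici 0))
    (m p : ℝ) (hm : 0 < m) (hp : 0 < p)
    (h : ∀ e : ℝ, 0 ≤ e → e < m → p * (σ m ^ 2 - σ e ^ 2) ≤ e - m) :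
    2 * σ m * derivWithin σ (Set.Ici 0) m ≤ -1 / p := by
  have hh := diff_sq σ hC2 m hm.le
  rw [hasDerivWithinAt_iff_tendsto_slope] at hh
  have hsub : Set.Ioo 0 m ⊆ Set.Ici 0 \ {m} := by
    intro x hx
    simp only [Set.mem_diff, Set.mem_Ici, Set.mem_singleton_iff]
    exact ⟨hx.1.le, ne_of_lt hx.2⟩
  have ht := hh.mono_left (nhdsWithin_mono m hsub)
  haveI : (nhdsWithin m (Set.Ioo 0 m)).NeBot := by
    rw [nhdsWithin_Ioo_eq_nhdsLT hm]
    infer_instance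
  refine le_of_tendsto ht ?_
  filter_upwards [self_mem_nhdsWithin] with e he
  obtain ⟨he0, hem⟩ := he
  have hkey := h e he0.le hem
  have h2 : σ m ^ 2 - σ e ^ 2 ≤ (e - m) / p := by
    rw [le_div_iff₀ hp]; nlinarith
  rw [slope_def_field, div_le_iff_of_neg (sub_neg.mpr hem)]
  have h3 : -1 / p * (e - m) = -((e - m) / p) := by ring
  linarith [h3]

lemma sigd_neg_aux (σ : ℝ → ℝ)
    (hanti : StrictAntiOn σ (Set.Ici 0))
    (hconv : ConvexOn ℝ (Set.Ici 0) σ)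
    (hC2 : ContDiffOn ℝ 2 σ (Set.Ici 0)) :
    sigd σ 0 < 0 := by
  have hd : DifferentiableOn ℝ σ (Set.Ici 0) := hC2.differentiableOn (by norm_num)
  have h1 : HasDerivWithinAt σ (sigd σ 0) (Set.Ici 0) 0 := (hd 0 (Set.mem_Ici.mpr (le_refl 0))).hasDerivWithinAt
  rw [hasDerivWithinAt_iff_tendsto_slope] at h1
  have hsub : Set.Ioi (0:ℝ) ⊆ Set.Ici 0 \ {0} := by
    intro x hx
    simp only [Set.mem_diff, Set.mem_Ici, Set.mem_singleton_iff]
    exact ⟨hx.le, ne_of_gt hx⟩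
  have ht := h1.mono_left (nhdsWithin_mono 0 hsub)
  have hle : sigd σ 0 ≤ σ 1 - σ 0 := by
    refine le_of_tendsto ht ?_
    filter_upwards [Ioc_mem_nhdsGT_of_mem (Set.left_mem_Ico.mpr zero_lt_one)] with e he
    obtain ⟨he0, he1⟩ := he
    have hcx := hconv.2 (Set.self_mem_Ici) (show (1:ℝ) ∈ Set.Ici 0 from Set.mem_Ici.mpr zero_le_one)
      (show (0:ℝ) ≤ 1 - e by linarith) he0.le (by ring)
    simp only [smul_eq_mul, mul_zero, mul_one, zero_add] at hcx
    rw [slope_def_field, sub_zero, div_le_iff₀ he0]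
    nlinarith
  have h01 := hanti (Set.self_mem_Ici) (show (1:ℝ) ∈ Set.Ici 0 from Set.mem_Ici.mpr zero_le_one) zero_lt_one
  linarith

theorem stmt_9 (σ μ : ℝ → ℝ)
    (hpos : ∀ e ∈ Set.Ici (0:ℝ), 0 < σ e)
    (hanti : StrictAntiOn σ (Set.Ici 0))
    (hconv : ConvexOn ℝ (Set.Ici 0) σ)
    (hC2 : ContDiffOn ℝ 2 σ (Set.Ici 0))
    (hμ : ∀ a : ℝ, 0 < a →
      UniqueMaxOn (fun e => -a * σ e ^ 2 - e) (Set.Ici 0) (μ a))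
    (w t α β : ℝ) (hw : 0 < w) (ht : 0 ≤ t)
    (hα : alow σ ≤ α) (hαβ : α ≤ β) (htβ : t ≤ β) :
    (min β (max α (max t w)) - t) ∈ {x : ℝ | 0 ≤ x ∧ α ≤ x + t ∧ x + t ≤ β} ∧
    (∀ x ∈ {x : ℝ | 0 ≤ x ∧ α ≤ x + t ∧ x + t ≤ β},
      w * σ (μ (min β (max α (max t w)))) ^ 2 + μ (min β (max α (max t w))) ≤
        w * σ (μ (x + t)) ^ 2 + μ (x + t)) ∧
    (∀ x ∈ {x : ℝ | 0 ≤ x ∧ α ≤ x + t ∧ x + t ≤ β},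
      x ≠ min β (max α (max t w)) - t →
      w * σ (μ (min β (max α (max t w)))) ^ 2 + μ (min β (max α (max t w))) <
        w * σ (μ (x + t)) ^ 2 + μ (x + t)) := by
  have hσ0 : 0 < σ 0 := hpos 0 (Set.mem_Ici.mpr (le_refl 0))
  have hd0 : sigd σ 0 < 0 := sigd_neg_aux σ hanti hconv hC2
  have halow : 0 < alow σ := by
    unfold alow
    apply div_pos_of_neg_of_neg (by norm_num)
    nlinarith
  set c := min β (max α (max t w)) with hcdef
  have hαc : α ≤ c := le_min hαβ (le_max_left _ _)
  have htc : t ≤ c := le_min htβ ((le_max_left t w).trans (le_max_right α _))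
  have hcβ : c ≤ β := min_le_left _ _
  have hc0 : 0 < c := lt_of_lt_of_le (lt_of_lt_of_le halow hα) hαc
  have key : ∀ a : ℝ, α ≤ a → t ≤ a → a ≤ β →
      w * σ (μ c) ^ 2 + μ c ≤ w * σ (μ a) ^ 2 + μ a ∧
      (a ≠ c → w * σ (μ c) ^ 2 + μ c ≠ w * σ (μ a) ^ 2 + μ a) := by
    intro a haα hat haβ
    have ha0 : 0 < a := lt_of_lt_of_le (lt_of_lt_of_le halow hα) haα
    obtain ⟨hma, hmaxa, huna⟩ := hμ a ha0
    obtain ⟨hmc, hmaxc, hunc⟩ := hμ c hc0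
    simp only [Set.mem_Ici] at hma hmc
    have optc : -c * σ (μ a) ^ 2 - μ a ≤ -c * σ (μ c) ^ 2 - μ c := hmaxc (μ a) hma
    have opta : -a * σ (μ c) ^ 2 - μ c ≤ -a * σ (μ a) ^ 2 - μ a := hmaxa (μ c) hmc
    have hprod : 0 ≤ (w - c) * (σ (μ a) ^ 2 - σ (μ c) ^ 2) := by
      rcases eq_or_ne a c with heqac | hneac
      · rw [heqac]; simp
      rcases lt_or_gt_of_ne hneac with hac | hca
      · rcases le_or_gt c w with h2 | h2
        · have hs : σ (μ c) ^ 2 ≤ σ (μ a) ^ 2 := by nlinarith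
          have hwc : 0 ≤ w - c := by linarith
          exact mul_nonneg hwc (by linarith)
        · -- w < c : then c ≤ max α t ≤ a, so a = c, contradiction
          exfalso
          have hcle : c ≤ max α t := by
            rcases le_total (max α t) w with h3 | h3
            · exfalso
              have : c ≤ w := le_trans (min_le_right _ _)
                (max_le (le_trans (le_max_left α t) h3)
                  (max_le (le_trans (le_max_right α t) h3) (le_refl w)))
              linarith
            · exact le_trans (min_le_right _ _)
                (max_le (le_max_left α t) (max_le (le_max_right α t) h3))
          have : c ≤ a := hcle.trans (max_le haα hat)
          linarith
      · rcases le_or_gt w c with h2 | h2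
        · have hs : σ (μ a) ^ 2 ≤ σ (μ c) ^ 2 := by nlinarith
          have hwc : w - c ≤ 0 := by linarith
          have hss : σ (μ a) ^ 2 - σ (μ c) ^ 2 ≤ 0 := by linarith
          nlinarith
        · -- c < w : then c = β and a ≤ β = c, contradiction with c < a
          exfalso
          have hcb : c = β := by
            rcases le_total β (max α (max t w)) with h3 | h3
            · exact min_eq_left h3
            · exfalso
              have hcm : c = max α (max t w) := min_eq_right h3
              have : w ≤ c := by
                rw [hcm]; exact (le_max_right t w).trans (le_max_right α _)
              linarith
          rw [hcb] at hca
          linarith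
    have weak : w * σ (μ c) ^ 2 + μ c ≤ w * σ (μ a) ^ 2 + μ a := by nlinarith
    refine ⟨weak, fun hne heq => ?_⟩
    -- equality forces μ a to be a maximizer for parameter c
    have hval : -c * σ (μ a) ^ 2 - μ a = -c * σ (μ c) ^ 2 - μ c :=
      le_antisymm optc (by nlinarith)
    have hμeq : μ a = μ c := by
      refine hunc (μ a) hma (fun e' he' => ?_)
      exact le_trans (hmaxc e' he') (le_of_eq hval.symm)
    set m := μ c with hmdef
    have hstrict : ∀ r : ℝ, 0 < r → μ r = m → ∀ e, 0 ≤ e → e ≠ m →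
        r * (σ m ^ 2 - σ e ^ 2) < e - m := by
      intro r hr hrm e he hne'
      obtain ⟨h1, h2, h3⟩ := hμ r hr
      have hle : -r * σ e ^ 2 - e ≤ -r * σ (μ r) ^ 2 - μ r := h2 e he
      have hne2 : -r * σ e ^ 2 - e ≠ -r * σ (μ r) ^ 2 - μ r := by
        intro hcontr
        refine hne' ?_
        rw [← hrm]
        exact h3 e he (fun e' he' => le_trans (h2 e' he') (ge_of_eq hcontr))
      rw [hrm] at hle hne2
      have := lt_of_le_of_ne hle hne2
      nlinarith
    set p := min a c with hpdef
    set q := max a c with hqdef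
    have hpq : p < q := min_lt_max.mpr hne
    have hp0 : 0 < p := lt_min ha0 hc0
    have hq0 : 0 < q := lt_of_lt_of_le hp0 hpq.le
    have hpm : μ p = m ∧ μ q = m := by
      rcases le_total a c with h | h
      · rw [hpdef, hqdef, min_eq_left h, max_eq_right h]
        exact ⟨hμeq, rfl⟩
      · rw [hpdef, hqdef, min_eq_right h, max_eq_left h]
        exact ⟨rfl, hμeq⟩
    have hm0 : 0 ≤ m := hmc
    have hR : -1 / q ≤ 2 * σ m * derivWithin σ (Set.Ici 0) m :=
      right_bound σ hC2 m q hm0 hq0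
        (fun e he hlt => (hstrict q hq0 hpm.2 e he (ne_of_gt hlt)).le)
    rcases eq_or_lt_of_le hm0 with hm | hm
    · -- m = 0
      have hR0 : -1 / q ≤ 2 * σ 0 * sigd σ 0 := by
        rw [← hm] at hR
        exact hR
      have hH : 2 * σ 0 * sigd σ 0 < 0 := mul_neg_of_pos_of_neg (by positivity) hd0
      have hqa : q ≤ alow σ := by
        unfold alow
        rw [le_div_iff_of_neg hH]
        rw [div_le_iff₀ hq0] at hR0
        linarith [mul_comm q (2 * σ 0 * sigd σ 0)]
      have hαp : α ≤ p := le_min haα hαc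
      linarith
    · -- 0 < m
      have hL : 2 * σ m * derivWithin σ (Set.Ici 0) m ≤ -1 / p :=
        left_bound σ hC2 m p hm hp0
          (fun e he hlt => (hstrict p hp0 hpm.1 e he (ne_of_lt hlt)).le)
      have hfin : -1 / q ≤ -1 / p := le_trans hR hL
      rw [div_le_div_iff₀ hq0 hp0] at hfin
      linarith
  refine ⟨?_, ?_, ?_⟩
  · simp only [Set.mem_setOf_eq]
    refine ⟨by linarith, by linarith, by linarith⟩
  · intro x hx
    simp only [Set.mem_setOf_eq] at hx
    exact (key (x + t) hx.2.1 (by linarith [hx.1]) hx.2.2).1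
  · intro x hx hnex
    simp only [Set.mem_setOf_eq] at hx
    have hne : x + t ≠ c := fun h => hnex (by linarith [h]) 
    exact lt_of_le_of_ne (key (x + t) hx.2.1 (by linarith [hx.1]) hx.2.2).1
      ((key (x + t) hx.2.1 (by linarith [hx.1]) hx.2.2).2 hne)
end
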